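/- The sequence L_n/n is non-increasing for n ≥ 3; that is, for every integer n ≥ 4, L_n/n ≤ L_{n−1}/(n−1). -/

import Mathlib

open Finset

/-- `Lseg n = Σ_{k=1}^{n} (−1)^{k+1} (2^{k−1}/k!) (n−k+1)`, the expected number of
transmissions in one slot from a fully occupied segment of `n` nodes (so `Lseg 0 = 0`). -/
noncomputable def Lseg (n : ℕ) : ℝ :=
  ∑ k ∈ Finset.Icc 1 n,
    (-1 : ℝ) ^ (k + 1) * (2 ^ (k - 1) / (Nat.factorial k : ℝ)) * ((n : ℝ) - (k : ℝ) + 1)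

noncomputable def aa (k : ℕ) : ℝ := (-1 : ℝ) ^ (k + 1) * (2 ^ (k - 1) / (Nat.factorial k : ℝ))

noncomputable def bb (k : ℕ) : ℝ := ((k : ℝ) - 1) * 2 ^ (k - 1) / (Nat.factorial k : ℝ)

noncomputable def D (m : ℕ) : ℝ := ∑ k ∈ Icc 1 m, (-1 : ℝ) ^ k * bb k

lemma Lseg_eq (n : ℕ) : Lseg n = ∑ k ∈ Icc 1 n, aa k * ((n : ℝ) - (k : ℝ) + 1) := rfl

lemma bb_nonneg (k : ℕ) (hk : 1 ≤ k) : 0 ≤ bb k := by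
  unfold bb
  apply div_nonneg _ (by positivity)
  apply mul_nonneg _ (by positivity)
  have : (1 : ℝ) ≤ k := by exact_mod_cast hk
  linarith

lemma bb_succ_le (j : ℕ) : bb (j + 4) ≤ bb (j + 3) := by
  unfold bb
  have e1 : j + 4 - 1 = j + 3 := by omega
  have e2 : j + 3 - 1 = j + 2 := by omega
  rw [e1, e2, div_le_div_iff₀ (by positivity) (by positivity)]
  have hf : (Nat.factorial (j+4) : ℝ) = (j+4) * Nat.factorial (j+3) := by
    exact_mod_cast Nat.factorial_succ (j+3)
  rw [hf]
  have h2 : (2:ℝ)^(j+3) = 2 * 2^(j+2) := by rw [pow_succ]; ring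
  rw [h2]
  have hFpos : (0:ℝ) < Nat.factorial (j+3) := by positivity
  have hppos : (0:ℝ) < 2^(j+2) := by positivity
  have hj : (0:ℝ) ≤ (j:ℝ) := by positivity
  push_cast
  have hPF : (0:ℝ) ≤ 2^(j+2) * Nat.factorial (j+3) := (mul_pos hppos hFpos).le
  have hq : (2*(j:ℝ) + 6) ≤ ((j:ℝ) + 2) * ((j:ℝ) + 4) := by nlinarith
  have := mul_le_mul_of_nonneg_right hq hPF
  nlinarith [this]

lemma fact15 (m : ℕ) (hm : 6 ≤ m) : 15 * 2 ^ m ≤ 2 * Nat.factorial m := by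
  induction m, hm using Nat.le_induction with
  | base => decide
  | succ n hn ih =>
    rw [pow_succ, Nat.factorial_succ]
    have h2 : 2 ≤ n + 1 := by omega
    calc 15 * (2^n * 2) = 2 * (15 * 2^n) := by ring
      _ ≤ 2 * (2 * Nat.factorial n) := by omega
      _ ≤ (n+1) * (2 * Nat.factorial n) := Nat.mul_le_mul_right _ h2
      _ = 2 * ((n+1) * Nat.factorial n) := by ring

lemma bb_small (m : ℕ) (hm : 6 ≤ m) : bb (m + 1) ≤ 2 / 15 := by
  unfold bb
  have e1 : m + 1 - 1 = m := by omega
  rw [e1, div_le_iff₀ (by positivity)]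
  have h := fact15 m hm
  have hc : (15 : ℝ) * 2 ^ m ≤ 2 * (Nat.factorial m : ℝ) := by exact_mod_cast h
  have hfs : (Nat.factorial (m+1) : ℝ) = (m + 1) * (Nat.factorial m : ℝ) := by
    exact_mod_cast Nat.factorial_succ m
  rw [hfs]
  have hm0 : (0:ℝ) ≤ (m:ℝ) := by positivity
  have hF : (0:ℝ) ≤ (Nat.factorial m : ℝ) := by positivity
  have := mul_le_mul_of_nonneg_left hc hm0
  push_cast
  nlinarith

lemma D_succ (m : ℕ) : D (m + 1) = D m + (-1 : ℝ) ^ (m+1) * bb (m+1) :=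
  Finset.sum_Icc_succ_top (by omega) _

lemma D1 : D 1 = 0 := by
  show ∑ k ∈ Icc 1 1, (-1 : ℝ) ^ k * bb k = 0
  rw [Finset.Icc_self, Finset.sum_singleton]
  norm_num [bb]

lemma D2 : D 2 = 1 := by
  have h := D_succ 1
  norm_num [D1, bb, Nat.factorial] at h
  convert h using 2

lemma D3 : D 3 = -(1/3) := by
  have h := D_succ 2
  rw [show (2:ℕ)+1 = 3 from rfl] at h
  rw [h, D2]
  norm_num [bb, Nat.factorial]

lemma D4 : D 4 = 2/3 := by
  have h := D_succ 3
  rw [show (3:ℕ)+1 = 4 from rfl] at h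
  rw [h, D3]
  norm_num [bb, Nat.factorial]

lemma D5 : D 5 = 2/15 := by
  have h := D_succ 4
  rw [show (4:ℕ)+1 = 5 from rfl] at h
  rw [h, D4]
  norm_num [bb, Nat.factorial]

lemma D_ge_odd (j : ℕ) : 2/15 ≤ D (2*j + 5) := by
  induction j with
  | zero => simp [D5]
  | succ j ih =>
    have e : 2*(j+1) + 5 = (2*j + 6) + 1 := by ring
    rw [e, D_succ]
    have e2 : 2*j + 6 = (2*j + 5) + 1 := by ring
    rw [e2, D_succ]
    have hev : ((-1:ℝ)) ^ (2*j + 5 + 1) = 1 := Even.neg_one_pow ⟨j + 3, by ring⟩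
    have hod : ((-1:ℝ)) ^ (2*j + 5 + 1 + 1) = -1 := Odd.neg_one_pow ⟨j + 3, by ring⟩
    rw [hev, hod]
    have hb := bb_succ_le (2*j + 3)
    have e3 : 2*j + 3 + 4 = 2*j + 5 + 1 + 1 := by ring
    have e4 : 2*j + 3 + 3 = 2*j + 5 + 1 := by ring
    rw [e3, e4] at hb
    linarith

lemma D_ge (m : ℕ) (hm : 5 ≤ m) : 2/15 ≤ D m := by
  rcases Nat.even_or_odd m with he | ho
  · obtain ⟨t, ht⟩ := he
    obtain ⟨j, hj⟩ : ∃ j, m = (2*j + 5) + 1 := ⟨t - 3, by omega⟩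
    rw [hj, D_succ]
    have hev : ((-1:ℝ)) ^ (2*j + 5 + 1) = 1 := Even.neg_one_pow ⟨j + 3, by ring⟩
    rw [hev]
    have := D_ge_odd j
    have hb := bb_nonneg (2*j + 5 + 1) (by omega)
    linarith
  · obtain ⟨t, ht⟩ := ho
    obtain ⟨j, hj⟩ : ∃ j, m = 2*j + 5 := ⟨t - 2, by omega⟩
    rw [hj]; exact D_ge_odd j

lemma key (m : ℕ) (hm : 3 ≤ m) : (m : ℝ) * aa (m + 1) ≤ D m := by
  have hma : (m : ℝ) * aa (m + 1) = (-1 : ℝ) ^ m * bb (m + 1) := by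
    unfold aa bb
    have e1 : m + 1 - 1 = m := by omega
    rw [e1]
    have hpow : ((-1:ℝ)) ^ (m + 1 + 1) = (-1:ℝ) ^ m := by
      rw [pow_succ, pow_succ]; ring
    rw [hpow]
    push_cast
    ring
  rw [hma]
  rcases Nat.even_or_odd m with he | ho
  · rw [he.neg_one_pow, one_mul]
    by_cases h4 : m = 4
    · subst h4
      rw [D4]
      norm_num [bb, Nat.factorial]
    · have hm6 : 6 ≤ m := by obtain ⟨t, ht⟩ := he; omega
      have := bb_small m hm6
      have := D_ge m (by omega)
      linarith
  · rw [ho.neg_one_pow, neg_one_mul]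
    by_cases h3 : m = 3
    · subst h3
      rw [D3]
      norm_num [bb, Nat.factorial]
    · have hm5 : 5 ≤ m := by obtain ⟨t, ht⟩ := ho; omega
      have h1 := D_ge m hm5
      have h2 := bb_nonneg (m+1) (by omega)
      linarith

lemma Esum (m : ℕ) : ∑ k ∈ Icc 1 m, ((k : ℝ) - 1) * aa k = -D m := by
  unfold D
  rw [← Finset.sum_neg_distrib]
  refine Finset.sum_congr rfl fun k _ => ?_
  unfold aa bb
  rw [pow_succ]
  ring

theorem Lseg_div_nonincreasing (n : ℕ) (hn : 4 ≤ n) :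
    Lseg n / (n : ℝ) ≤ Lseg (n - 1) / ((n : ℝ) - 1) := by
  obtain ⟨m, rfl⟩ : ∃ m, n = m + 1 := ⟨n - 1, by omega⟩
  have hm : 3 ≤ m := by omega
  have hmr : (3 : ℝ) ≤ (m : ℝ) := by exact_mod_cast hm
  simp only [Nat.add_sub_cancel]
  push_cast
  rw [div_le_div_iff₀ (by linarith) (by linarith)]
  rw [show (m:ℝ) + 1 - 1 = (m:ℝ) by ring]
  have hsplit : Lseg (m+1) =
      (∑ k ∈ Icc 1 m, aa k * (((m:ℝ) + 1) - (k:ℝ) + 1)) + aa (m+1) * (((m:ℝ)+1) - ((m:ℝ)+1) + 1) := by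
    rw [Lseg_eq, Finset.sum_Icc_succ_top (by omega)]
    push_cast
    ring
  have h1 : (∑ k ∈ Icc 1 m, aa k * (((m:ℝ) + 1) - (k:ℝ) + 1)) * (m:ℝ)
      - (∑ k ∈ Icc 1 m, aa k * ((m:ℝ) - (k:ℝ) + 1)) * ((m:ℝ) + 1)
      = ∑ k ∈ Icc 1 m, ((k : ℝ) - 1) * aa k := by
    rw [Finset.sum_mul, Finset.sum_mul, ← Finset.sum_sub_distrib]
    exact Finset.sum_congr rfl fun k _ => by ring
  have hfinal : Lseg (m+1) * (m:ℝ) - Lseg m * ((m:ℝ) + 1)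
      = (∑ k ∈ Icc 1 m, ((k : ℝ) - 1) * aa k) + (m:ℝ) * aa (m+1) := by
    rw [← h1, hsplit, Lseg_eq m]
    ring
  have hk := key m hm
  have hE := Esum m
  linarith
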